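/- Assume M is ergodic with unique invariant distribution π_M and set c_* := min_{ℓ∈K} π_M^ℓ. Then there exists a constant C > 0 such that for every δ with 1 − c_*/2 < δ < 1 one has sup_{ξ ∈ Δ(K)} |v_δ(ξ) − v_δ(π_M)| ≤ C·(1−δ)·log₂(1/(1−δ)). -/

import Mathlib

open scoped BigOperators

noncomputable section

/-- A row-stochastic matrix: nonnegative entries, rows summing to 1. -/
def IsStochastic {K : Type*} [Fintype K] (M : Matrix K K ℝ) : Prop :=
  (∀ i j, 0 ≤ M i j) ∧ ∀ i, ∑ j, M i j = 1

/-- A split of `ξ`: a countable family of weights `α` and beliefs `ξs` with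
`α s ≥ 0`, `ξs s ∈ Δ(K)`, `∑ α = 1` and `∑ α_s ξ_s = ξ`. -/
def IsSplit {K : Type*} [Fintype K] (ξ : K → ℝ) (α : ℕ → ℝ) (ξs : ℕ → K → ℝ) : Prop :=
  (∀ s, 0 ≤ α s) ∧ (∀ s, ξs s ∈ stdSimplex ℝ K) ∧ (∑' s, α s) = 1 ∧
    ∀ ℓ : K, (∑' s, α s * ξs s ℓ) = ξ ℓ

/-- The one-stage payoff of a split in the δ-discounted Bellman equation. -/
def splitPayoff {K : Type*} [Fintype K] (M : Matrix K K ℝ) (u : (K → ℝ) → ℝ) (δ : ℝ)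
    (w : (K → ℝ) → ℝ) (α : ℕ → ℝ) (ξs : ℕ → K → ℝ) : ℝ :=
  ∑' s, α s * ((1 - δ) * u (ξs s) + δ * w (Matrix.vecMul (ξs s) M))

/-- `v` is the family of δ-discounted values of the Markovian persuasion game:
for each `δ ∈ [0,1)`, `v δ` is bounded between `0` and `C = ‖u‖∞` on `Δ(K)` and
satisfies the Bellman equation there. -/
def IsValueFamily {K : Type*} [Fintype K] (M : Matrix K K ℝ) (u : (K → ℝ) → ℝ) (C : ℝ)
    (v : ℝ → (K → ℝ) → ℝ) : Prop :=
  ∀ δ ∈ Set.Ico (0 : ℝ) 1,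
    (∀ ξ ∈ stdSimplex ℝ K, 0 ≤ v δ ξ ∧ v δ ξ ≤ C) ∧
    ∀ ξ ∈ stdSimplex ℝ K,
      v δ ξ = sSup { r : ℝ | ∃ α ξs, IsSplit ξ α ξs ∧ r = splitPayoff M u δ (v δ) α ξs }

section Basics
set_option linter.unusedSectionVars false
variable {K : Type*} [Fintype K] [Nonempty K] [DecidableEq K]

lemma simplex_nonneg {ξ : K → ℝ} (h : ξ ∈ stdSimplex ℝ K) (ℓ : K) : 0 ≤ ξ ℓ := h.1 ℓ

lemma simplex_sum {ξ : K → ℝ} (h : ξ ∈ stdSimplex ℝ K) : ∑ ℓ, ξ ℓ = 1 := h.2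

lemma simplex_le_one {ξ : K → ℝ} (h : ξ ∈ stdSimplex ℝ K) (ℓ : K) : ξ ℓ ≤ 1 := by
  have := Finset.single_le_sum (f := ξ) (fun i _ => h.1 i) (Finset.mem_univ ℓ)
  simpa [h.2] using this

lemma vecMul_mem {M : Matrix K K ℝ} (hM : IsStochastic M) {ξ : K → ℝ}
    (h : ξ ∈ stdSimplex ℝ K) : Matrix.vecMul ξ M ∈ stdSimplex ℝ K := by
  constructor
  · intro j
    simp only [Matrix.vecMul, dotProduct]
    exact Finset.sum_nonneg fun i _ => mul_nonneg (h.1 i) (hM.1 i j)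
  · simp only [Matrix.vecMul, dotProduct]
    rw [Finset.sum_comm]
    simp only [← Finset.mul_sum, hM.2]
    simpa using h.2

lemma stoch_mul {M N : Matrix K K ℝ} (hM : IsStochastic M) (hN : IsStochastic N) :
    IsStochastic (M * N) := by
  constructor
  · intro i j
    rw [Matrix.mul_apply]
    exact Finset.sum_nonneg fun l _ => mul_nonneg (hM.1 i l) (hN.1 l j)
  · intro i
    simp only [Matrix.mul_apply]
    rw [Finset.sum_comm]
    simp only [← Finset.mul_sum, hN.2, mul_one, hM.2]

lemma stoch_pow {M : Matrix K K ℝ} (hM : IsStochastic M) (n : ℕ) : IsStochastic (M ^ n) := by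
  induction n with
  | zero =>
    constructor
    · intro i j
      simp [Matrix.one_apply]
      split <;> norm_num
    · intro i; simp [Matrix.one_apply]
  | succ n ih => rw [pow_succ]; exact stoch_mul ih hM

lemma split_summable {ξ : K → ℝ} {α : ℕ → ℝ} {ξs : ℕ → K → ℝ} (h : IsSplit ξ α ξs) :
    Summable α := by
  by_contra hs
  have := tsum_eq_zero_of_not_summable hs
  rw [h.2.2.1] at this
  norm_num at this

/-- tsum of `α s * f s` with `0 ≤ f ≤ B`, weights summing to 1: summable, and bounds. -/
lemma weighted_summable {α : ℕ → ℝ} (hα : ∀ s, 0 ≤ α s) (hαs : Summable α)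
    {f : ℕ → ℝ} {B : ℝ} (hf0 : ∀ s, 0 ≤ f s) (hfB : ∀ s, f s ≤ B) :
    Summable (fun s => α s * f s) :=
  Summable.of_nonneg_of_le (fun s => mul_nonneg (hα s) (hf0 s))
    (fun s => mul_le_mul_of_nonneg_left (hfB s) (hα s)) (hαs.mul_right B)

lemma weighted_le {α : ℕ → ℝ} (hα : ∀ s, 0 ≤ α s) (hαs : Summable α) (hα1 : (∑' s, α s) = 1)
    {f : ℕ → ℝ} {B : ℝ} (hf0 : ∀ s, 0 ≤ f s) (hfB : ∀ s, f s ≤ B) :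
    (∑' s, α s * f s) ≤ B := by
  calc (∑' s, α s * f s) ≤ ∑' s, α s * B :=
        Summable.tsum_le_tsum (fun s => mul_le_mul_of_nonneg_left (hfB s) (hα s))
          (weighted_summable hα hαs hf0 hfB) (hαs.mul_right B)
    _ = B := by rw [tsum_mul_right, hα1, one_mul]

lemma weighted_nonneg {α : ℕ → ℝ} (hα : ∀ s, 0 ≤ α s) {f : ℕ → ℝ} (hf0 : ∀ s, 0 ≤ f s) :
    0 ≤ ∑' s, α s * f s :=
  tsum_nonneg fun s => mul_nonneg (hα s) (hf0 s)

end Basics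

section Value2
set_option linter.unusedSectionVars false
variable {K : Type*} [Fintype K] [Nonempty K] [DecidableEq K]

lemma contraction {P : Matrix K K ℝ} (hP : IsStochastic P) {ε₀ : ℝ}
    (hε : ∀ i j, ε₀ ≤ P i j) {w : K → ℝ} (hw : ∑ i, w i = 0) :
    ∑ ℓ, |Matrix.vecMul w P ℓ| ≤ (1 - (Fintype.card K : ℝ) * ε₀) * ∑ i, |w i| := by
  have hstep : ∀ ℓ, |Matrix.vecMul w P ℓ| ≤ ∑ i, |w i| * (P i ℓ - ε₀) := by
    intro ℓ
    have h1 : Matrix.vecMul w P ℓ = ∑ i, w i * (P i ℓ - ε₀) := by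
      simp only [Matrix.vecMul, dotProduct, mul_sub]
      rw [Finset.sum_sub_distrib, ← Finset.sum_mul, hw]
      ring
    rw [h1]
    refine le_trans (Finset.abs_sum_le_sum_abs _ _) (Finset.sum_le_sum fun i _ => ?_)
    rw [abs_mul]
    have : |P i ℓ - ε₀| = P i ℓ - ε₀ := abs_of_nonneg (by linarith [hε i ℓ])
    rw [this]
  calc ∑ ℓ, |Matrix.vecMul w P ℓ| ≤ ∑ ℓ, ∑ i, |w i| * (P i ℓ - ε₀) :=
        Finset.sum_le_sum fun ℓ _ => hstep ℓ
    _ = ∑ i, |w i| * ∑ ℓ, (P i ℓ - ε₀) := by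
        rw [Finset.sum_comm]
        exact Finset.sum_congr rfl fun i _ => by rw [Finset.mul_sum]
    _ = ∑ i, |w i| * (1 - (Fintype.card K : ℝ) * ε₀) := by
        refine Finset.sum_congr rfl fun i _ => ?_
        rw [Finset.sum_sub_distrib, hP.2 i]
        simp [Finset.card_univ, mul_comm]
    _ = (1 - (Fintype.card K : ℝ) * ε₀) * ∑ i, |w i| := by
        rw [← Finset.sum_mul]; ring

lemma vecMul_sum_zero {P : Matrix K K ℝ} (hP : IsStochastic P) {w : K → ℝ}
    (hw : ∑ i, w i = 0) : ∑ ℓ, Matrix.vecMul w P ℓ = 0 := by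
  simp only [Matrix.vecMul, dotProduct]
  rw [Finset.sum_comm]
  have : ∀ i, ∑ ℓ, w i * P i ℓ = w i := fun i => by rw [← Finset.mul_sum, hP.2 i, mul_one]
  simp only [this, hw]

lemma mixing {P : Matrix K K ℝ} (hP : IsStochastic P) {ε₀ : ℝ}
    (hε : ∀ i j, ε₀ ≤ P i j) {π : K → ℝ} (hπ : π ∈ stdSimplex ℝ K)
    (hπP : Matrix.vecMul π P = π) {ξ : K → ℝ} (hξ : ξ ∈ stdSimplex ℝ K) (m : ℕ) :
    ∑ ℓ, |Matrix.vecMul ξ (P^m) ℓ - π ℓ| ≤ 2 * (1 - (Fintype.card K : ℝ) * ε₀)^m := by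
  set θ : ℝ := 1 - (Fintype.card K : ℝ) * ε₀ with hθ
  induction m with
  | zero =>
    rw [pow_zero, Matrix.vecMul_one, pow_zero, mul_one]
    calc ∑ ℓ, |ξ ℓ - π ℓ| ≤ ∑ ℓ, (ξ ℓ + π ℓ) := Finset.sum_le_sum fun ℓ _ => by
          have := abs_sub (ξ ℓ) (π ℓ)
          have h1 := abs_of_nonneg (hξ.1 ℓ)
          have h2 := abs_of_nonneg (hπ.1 ℓ)
          calc |ξ ℓ - π ℓ| ≤ |ξ ℓ| + |π ℓ| := abs_sub _ _
            _ = ξ ℓ + π ℓ := by rw [h1, h2]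
      _ = 2 := by rw [Finset.sum_add_distrib, hξ.2, hπ.2]; norm_num
  | succ m ih =>
    have hθ0 : 0 ≤ θ := by
      obtain ⟨i⟩ := ‹Nonempty K›
      have h1 : ∑ (_ : K), ε₀ ≤ ∑ ℓ, P i ℓ := Finset.sum_le_sum fun ℓ _ => hε i ℓ
      rw [hP.2 i] at h1
      simp only [Finset.sum_const, Finset.card_univ, nsmul_eq_mul] at h1
      rw [hθ]; linarith
    have hwsum : ∑ i, (Matrix.vecMul ξ (P^m) i - π i) = 0 := by
      have h1 : Matrix.vecMul ξ (P^m) ∈ stdSimplex ℝ K := by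
        clear ih
        induction m with
        | zero => rw [pow_zero, Matrix.vecMul_one]; exact hξ
        | succ m ihm =>
          rw [pow_succ, ← Matrix.vecMul_vecMul]
          exact vecMul_mem hP ihm
      rw [Finset.sum_sub_distrib, h1.2, hπ.2]; ring
    have hstep : ∀ ℓ, Matrix.vecMul ξ (P^(m+1)) ℓ - π ℓ
        = Matrix.vecMul (fun i => Matrix.vecMul ξ (P^m) i - π i) P ℓ := by
      intro ℓ
      have h1 : (fun i => Matrix.vecMul ξ (P^m) i - π i) = Matrix.vecMul ξ (P^m) - π := rfl
      rw [h1, Matrix.sub_vecMul, hπP, Matrix.vecMul_vecMul, ← pow_succ]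
      rfl
    calc ∑ ℓ, |Matrix.vecMul ξ (P^(m+1)) ℓ - π ℓ|
        = ∑ ℓ, |Matrix.vecMul (fun i => Matrix.vecMul ξ (P^m) i - π i) P ℓ| := by
          exact Finset.sum_congr rfl fun ℓ _ => by rw [hstep ℓ]
      _ ≤ θ * ∑ i, |Matrix.vecMul ξ (P^m) i - π i| := contraction hP hε hwsum
      _ ≤ θ * (2 * θ^m) := by
          apply mul_le_mul_of_nonneg_left ih hθ0
      _ = 2 * θ^(m+1) := by ring

section Value
set_option linter.unusedSectionVars false
variable (M : Matrix K K ℝ) (hM : IsStochastic M) (u : (K → ℝ) → ℝ)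
  (hu0 : ∀ ξ ∈ stdSimplex ℝ K, 0 ≤ u ξ) (C : ℝ) (hC : IsLUB (u '' stdSimplex ℝ K) C)
  (v : ℝ → (K → ℝ) → ℝ) (hv : IsValueFamily M u C v) (δ : ℝ) (hδ : δ ∈ Set.Ico (0:ℝ) 1)

include hM hu0 hC hv hδ

lemma uleC {ξ : K → ℝ} (h : ξ ∈ stdSimplex ℝ K) : u ξ ≤ C :=
  hC.1 (Set.mem_image_of_mem u h)

/-- the one-stage value `g` is in `[0, C]` on the simplex. -/
lemma g_nonneg {ξ : K → ℝ} (h : ξ ∈ stdSimplex ℝ K) :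
    0 ≤ (1 - δ) * u ξ + δ * v δ (Matrix.vecMul ξ M) := by
  have h1 := (hv δ hδ).1 _ (vecMul_mem hM h)
  have := hu0 ξ h
  nlinarith [hδ.1, hδ.2]

lemma g_le_C {ξ : K → ℝ} (h : ξ ∈ stdSimplex ℝ K) :
    (1 - δ) * u ξ + δ * v δ (Matrix.vecMul ξ M) ≤ C := by
  have h1 := (hv δ hδ).1 _ (vecMul_mem hM h)
  have h2 := uleC M hM u hu0 C hC v hv δ hδ h
  nlinarith [hδ.1, hδ.2]

lemma payoff_summable {α : ℕ → ℝ} {ξs : ℕ → K → ℝ} {ξ : K → ℝ} (hsp : IsSplit ξ α ξs) :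
    Summable (fun s => α s * ((1 - δ) * u (ξs s) + δ * v δ (Matrix.vecMul (ξs s) M))) :=
  weighted_summable hsp.1 (split_summable hsp)
    (fun s => g_nonneg M hM u hu0 C hC v hv δ hδ (hsp.2.1 s))
    (fun s => g_le_C M hM u hu0 C hC v hv δ hδ (hsp.2.1 s))

lemma payoff_le_C {α : ℕ → ℝ} {ξs : ℕ → K → ℝ} {ξ : K → ℝ} (hsp : IsSplit ξ α ξs) :
    splitPayoff M u δ (v δ) α ξs ≤ C :=
  weighted_le hsp.1 (split_summable hsp) hsp.2.2.1
    (fun s => g_nonneg M hM u hu0 C hC v hv δ hδ (hsp.2.1 s))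
    (fun s => g_le_C M hM u hu0 C hC v hv δ hδ (hsp.2.1 s))

omit hM hu0 hC hv hδ in
lemma trivial_split {ξ : K → ℝ} (h : ξ ∈ stdSimplex ℝ K) :
    IsSplit ξ (fun s => if s = 0 then 1 else 0) (fun _ => ξ) := by
  refine ⟨fun s => by positivity, fun _ => h, by rw [tsum_ite_eq], fun ℓ => ?_⟩
  have : (fun s : ℕ => (if s = 0 then (1:ℝ) else 0) * ξ ℓ)
      = fun s : ℕ => if s = 0 then ξ ℓ else 0 := by
    funext s; split <;> simp
  rw [this, tsum_ite_eq]

omit hM hu0 hC hv hδ in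
lemma trivial_payoff {ξ : K → ℝ} :
    splitPayoff M u δ (v δ) (fun s => if s = 0 then 1 else 0) (fun _ => ξ)
      = (1 - δ) * u ξ + δ * v δ (Matrix.vecMul ξ M) := by
  unfold splitPayoff
  have : (fun s : ℕ => (if s = 0 then (1:ℝ) else 0) *
      ((1 - δ) * u ξ + δ * v δ (Matrix.vecMul ξ M)))
      = fun s : ℕ => if s = 0 then ((1 - δ) * u ξ + δ * v δ (Matrix.vecMul ξ M)) else 0 := by
    funext s; split <;> simp
  rw [this, tsum_ite_eq]

lemma split_set_def {ξ : K → ℝ} (h : ξ ∈ stdSimplex ℝ K) :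
    v δ ξ = sSup { r : ℝ | ∃ α ξs, IsSplit ξ α ξs ∧ r = splitPayoff M u δ (v δ) α ξs } :=
  (hv δ hδ).2 ξ h

lemma le_v {ξ : K → ℝ} (h : ξ ∈ stdSimplex ℝ K) {α : ℕ → ℝ} {ξs : ℕ → K → ℝ}
    (hsp : IsSplit ξ α ξs) : splitPayoff M u δ (v δ) α ξs ≤ v δ ξ := by
  rw [split_set_def M hM u hu0 C hC v hv δ hδ h]
  apply le_csSup
  · refine ⟨C, ?_⟩
    rintro r ⟨α', ξs', hsp', rfl⟩
    exact payoff_le_C M hM u hu0 C hC v hv δ hδ hsp'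
  · exact ⟨α, ξs, hsp, rfl⟩

lemma v_le {ξ : K → ℝ} (h : ξ ∈ stdSimplex ℝ K) {B : ℝ}
    (hB : ∀ α ξs, IsSplit ξ α ξs → splitPayoff M u δ (v δ) α ξs ≤ B) : v δ ξ ≤ B := by
  rw [split_set_def M hM u hu0 C hC v hv δ hδ h]
  apply csSup_le
  · exact ⟨_, _, _, trivial_split h, rfl⟩
  · rintro r ⟨α', ξs', hsp', rfl⟩
    exact hB _ _ hsp'


lemma v_concave {ξ : K → ℝ} (hξ : ξ ∈ stdSimplex ℝ K) {α : ℕ → ℝ} {ξs : ℕ → K → ℝ}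
    (hsp : IsSplit ξ α ξs) : (∑' s, α s * v δ (ξs s)) ≤ v δ ξ := by
  have hα0 := hsp.1
  have hαsum := split_summable hsp
  have hξsΔ := hsp.2.1
  -- abbreviation for the one-stage value
  set g : (K → ℝ) → ℝ := fun η => (1 - δ) * u η + δ * v δ (Matrix.vecMul η M) with hg
  -- summability of the target
  have hsumtgt : Summable (fun s => α s * v δ (ξs s)) :=
    weighted_summable hα0 hαsum (fun s => ((hv δ hδ).1 _ (hξsΔ s)).1)
      (fun s => ((hv δ hδ).1 _ (hξsΔ s)).2)
  refine le_of_forall_pos_le_add fun ε hε => ?_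
  -- choose near-optimal splits for each ξs s
  have hexists : ∀ s : ℕ, ∃ β : ℕ → ℝ, ∃ ζ : ℕ → K → ℝ, IsSplit (ξs s) β ζ ∧
      v δ (ξs s) - ε * (1/2)^(s+1) < splitPayoff M u δ (v δ) β ζ := by
    intro s
    have hne : { r : ℝ | ∃ β ζ, IsSplit (ξs s) β ζ ∧ r = splitPayoff M u δ (v δ) β ζ }.Nonempty :=
      ⟨_, _, _, trivial_split (hξsΔ s), rfl⟩
    have hlt : v δ (ξs s) - ε * (1/2)^(s+1) <
        sSup { r : ℝ | ∃ β ζ, IsSplit (ξs s) β ζ ∧ r = splitPayoff M u δ (v δ) β ζ } := by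
      rw [← split_set_def M hM u hu0 C hC v hv δ hδ (hξsΔ s)]
      have : (0:ℝ) < ε * (1/2)^(s+1) := by positivity
      linarith
    obtain ⟨r, ⟨β, ζ, hβζ, rfl⟩, hr⟩ := exists_lt_of_lt_csSup hne hlt
    exact ⟨β, ζ, hβζ, hr⟩
  choose β ζ hβζ hβζlt using hexists
  -- the composed split over ℕ × ℕ
  set e : ℕ ≃ ℕ × ℕ := (Denumerable.eqv (ℕ × ℕ)).symm with he
  set F : ℕ × ℕ → ℝ := fun p => α p.1 * β p.1 p.2 with hF
  have hF0 : ∀ p, 0 ≤ F p := fun p => mul_nonneg (hα0 p.1) ((hβζ p.1).1 p.2)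
  have hβsum : ∀ s, Summable (β s) := fun s => split_summable (hβζ s)
  have hFinner : ∀ s, Summable (fun t => F (s, t)) := fun s => (hβsum s).mul_left (α s)
  have hFinner_sum : ∀ s, (∑' t, F (s, t)) = α s := by
    intro s
    simp only [hF]
    rw [tsum_mul_left, (hβζ s).2.2.1, mul_one]
  have hFsum : Summable F := by
    rw [summable_prod_of_nonneg hF0]
    refine ⟨hFinner, ?_⟩
    simp only [hFinner_sum]
    exact hαsum
  set γ : ℕ → ℝ := fun t => F (e t) with hγ
  set ζ' : ℕ → K → ℝ := fun t => ζ (e t).1 (e t).2 with hζ'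
  have hγ0 : ∀ t, 0 ≤ γ t := fun t => hF0 (e t)
  have hζ'Δ : ∀ t, ζ' t ∈ stdSimplex ℝ K := fun t => (hβζ (e t).1).2.1 (e t).2
  have hγsum : (∑' t, γ t) = 1 := by
    rw [hγ, Equiv.tsum_eq e F, Summable.tsum_prod' hFsum hFinner]
    calc (∑' (s : ℕ) (t : ℕ), F (s, t)) = ∑' s, α s := by simp only [hFinner_sum]
      _ = 1 := hsp.2.2.1
  have hsplitγ : IsSplit ξ γ ζ' := by
    refine ⟨hγ0, hζ'Δ, hγsum, fun ℓ => ?_⟩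
    have hGsum : Summable (fun p : ℕ × ℕ => F p * ζ p.1 p.2 ℓ) :=
      Summable.of_nonneg_of_le
        (fun p => mul_nonneg (hF0 p) (((hβζ p.1).2.1 p.2).1 ℓ))
        (fun p => mul_le_of_le_one_right (hF0 p) (simplex_le_one ((hβζ p.1).2.1 p.2) ℓ))
        hFsum
    have hGinner : ∀ s, Summable (fun t => F (s, t) * ζ s t ℓ) := fun s =>
      Summable.of_nonneg_of_le
        (fun t => mul_nonneg (hF0 (s, t)) (((hβζ s).2.1 t).1 ℓ))
        (fun t => mul_le_of_le_one_right (hF0 (s, t)) (simplex_le_one ((hβζ s).2.1 t) ℓ))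
        (hFinner s)
    have heq : (∑' t, γ t * ζ' t ℓ) = ∑' p : ℕ × ℕ, F p * ζ p.1 p.2 ℓ :=
      Equiv.tsum_eq e (fun p => F p * ζ p.1 p.2 ℓ)
    rw [heq, Summable.tsum_prod' hGsum hGinner, ← hsp.2.2.2 ℓ]
    refine tsum_congr fun s => ?_
    simp only [hF, mul_assoc]
    rw [tsum_mul_left]
    congr 1
    exact (hβζ s).2.2.2 ℓ
  -- the payoff of the composed split
  have hg0 : ∀ {η : K → ℝ}, η ∈ stdSimplex ℝ K → 0 ≤ g η := fun hη => g_nonneg M hM u hu0 C hC v hv δ hδ hη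
  have hgC : ∀ {η : K → ℝ}, η ∈ stdSimplex ℝ K → g η ≤ C := fun hη => g_le_C M hM u hu0 C hC v hv δ hδ hη
  have hpayoff : splitPayoff M u δ (v δ) γ ζ' = ∑' s, α s * splitPayoff M u δ (v δ) (β s) (ζ s) := by
    have hHsum : Summable (fun p : ℕ × ℕ => F p * g (ζ p.1 p.2)) :=
      Summable.of_nonneg_of_le
        (fun p => mul_nonneg (hF0 p) (hg0 ((hβζ p.1).2.1 p.2)))
        (fun p => mul_le_mul_of_nonneg_left (hgC ((hβζ p.1).2.1 p.2)) (hF0 p))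
        (hFsum.mul_right C)
    have hHinner : ∀ s, Summable (fun t => F (s, t) * g (ζ s t)) := fun s =>
      Summable.of_nonneg_of_le
        (fun t => mul_nonneg (hF0 (s, t)) (hg0 ((hβζ s).2.1 t)))
        (fun t => mul_le_mul_of_nonneg_left (hgC ((hβζ s).2.1 t)) (hF0 (s, t)))
        ((hFinner s).mul_right C)
    have h1 : splitPayoff M u δ (v δ) γ ζ' = ∑' p : ℕ × ℕ, F p * g (ζ p.1 p.2) :=
      Equiv.tsum_eq e (fun p => F p * g (ζ p.1 p.2))
    rw [h1, Summable.tsum_prod' hHsum hHinner]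
    refine tsum_congr fun s => ?_
    simp only [hF, mul_assoc]
    rw [tsum_mul_left]
    rfl
  -- each payoff is in [0, C]
  have hP0 : ∀ s, 0 ≤ splitPayoff M u δ (v δ) (β s) (ζ s) := fun s =>
    tsum_nonneg fun t => mul_nonneg ((hβζ s).1 t) (hg0 ((hβζ s).2.1 t))
  have hPC : ∀ s, splitPayoff M u δ (v δ) (β s) (ζ s) ≤ C := fun s =>
    weighted_le (hβζ s).1 (hβsum s) (hβζ s).2.2.1
      (fun t => hg0 ((hβζ s).2.1 t)) (fun t => hgC ((hβζ s).2.1 t))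
  have hPsum : Summable (fun s => α s * splitPayoff M u δ (v δ) (β s) (ζ s)) :=
    weighted_summable hα0 hαsum hP0 hPC
  -- error term summability
  have hgeo : Summable (fun s : ℕ => ε * (1/2:ℝ)^(s+1)) := by
    apply Summable.mul_left
    exact (summable_geometric_of_lt_one (by norm_num) (by norm_num)).comp_injective
      (add_left_injective 1) |>.congr (fun s => rfl)
  have herrsum : Summable (fun s => α s * (ε * (1/2:ℝ)^(s+1))) := by
    refine Summable.of_nonneg_of_le
      (fun s => mul_nonneg (hα0 s) (by positivity)) (fun s => ?_) hgeo
    have hα1 : α s ≤ 1 := by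
      have := Summable.le_tsum hαsum s (fun s' _ => hα0 s')
      rw [hsp.2.2.1] at this
      linarith [this]
    exact mul_le_of_le_one_left (by positivity) hα1
  have herr_le : (∑' s, α s * (ε * (1/2:ℝ)^(s+1))) ≤ ε := by
    have h1 : (∑' s, α s * (ε * (1/2:ℝ)^(s+1))) ≤ ∑' s : ℕ, ε * (1/2:ℝ)^(s+1) := by
      refine Summable.tsum_le_tsum (fun s => ?_) herrsum hgeo
      have hα1 : α s ≤ 1 := by
        have := Summable.le_tsum hαsum s (fun s' _ => hα0 s')
        rw [hsp.2.2.1] at this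
        linarith [this]
      exact mul_le_of_le_one_left (by positivity) hα1
    have h2 : (∑' s : ℕ, ε * (1/2:ℝ)^(s+1)) = ε := by
      rw [tsum_mul_left]
      have : (∑' s : ℕ, (1/2:ℝ)^(s+1)) = 1 := by
        have hgeo2 : (∑' s : ℕ, (1/2:ℝ)^s) = 2 := by
          rw [tsum_geometric_of_lt_one (by norm_num) (by norm_num)]; norm_num
        calc (∑' s : ℕ, (1/2:ℝ)^(s+1)) = ∑' s : ℕ, (1/2) * (1/2:ℝ)^s := by
              refine tsum_congr fun s => ?_; ring
          _ = (1/2) * ∑' s : ℕ, (1/2:ℝ)^s := tsum_mul_left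
          _ = 1 := by rw [hgeo2]; norm_num
      rw [this, mul_one]
    linarith
  -- put it together
  have hmain : (∑' s, α s * v δ (ξs s)) - ε ≤ splitPayoff M u δ (v δ) γ ζ' := by
    rw [hpayoff]
    have hle : ∀ s, α s * v δ (ξs s) - α s * (ε * (1/2:ℝ)^(s+1))
        ≤ α s * splitPayoff M u δ (v δ) (β s) (ζ s) := by
      intro s
      have := hβζlt s
      nlinarith [hα0 s]
    have hsub : Summable (fun s => α s * v δ (ξs s) - α s * (ε * (1/2:ℝ)^(s+1))) :=
      hsumtgt.sub herrsum
    have := Summable.tsum_le_tsum hle hsub hPsum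
    rw [Summable.tsum_sub hsumtgt herrsum] at this
    linarith [herr_le]
  have := le_v M hM u hu0 C hC v hv δ hδ hξ hsplitγ
  linarith


lemma step_lower {ξ : K → ℝ} (hξ : ξ ∈ stdSimplex ℝ K) :
    δ * v δ (Matrix.vecMul ξ M) ≤ v δ ξ := by
  have h1 := le_v M hM u hu0 C hC v hv δ hδ hξ (trivial_split hξ)
  rw [trivial_payoff M u v δ (ξ := ξ)] at h1
  have h2 := hu0 ξ hξ
  nlinarith [hδ.1, hδ.2]

omit hM hu0 hC hv hδ in
lemma split_vecMul (hM : IsStochastic M) {ξ : K → ℝ} {α : ℕ → ℝ} {ξs : ℕ → K → ℝ}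
    (hsp : IsSplit ξ α ξs) :
    IsSplit (Matrix.vecMul ξ M) α (fun s => Matrix.vecMul (ξs s) M) := by
  have hα0 := hsp.1
  have hαsum : Summable α := by
    by_contra hs
    have := tsum_eq_zero_of_not_summable hs
    rw [hsp.2.2.1] at this; norm_num at this
  refine ⟨hα0, fun s => vecMul_mem hM (hsp.2.1 s), hsp.2.2.1, fun ℓ => ?_⟩
  have hsumi : ∀ i : K, Summable (fun s => α s * (ξs s i * M i ℓ)) := by
    intro i
    refine Summable.of_nonneg_of_le
      (fun s => mul_nonneg (hα0 s) (mul_nonneg ((hsp.2.1 s).1 i) (hM.1 i ℓ)))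
      (fun s => ?_) (hαsum.mul_right (M i ℓ))
    have h1 : ξs s i * M i ℓ ≤ M i ℓ :=
      mul_le_of_le_one_left (hM.1 i ℓ) (simplex_le_one (hsp.2.1 s) i)
    exact mul_le_mul_of_nonneg_left h1 (hα0 s)
  have h1 : (∑' s, α s * Matrix.vecMul (ξs s) M ℓ)
      = ∑' s, ∑ i, α s * (ξs s i * M i ℓ) := by
    refine tsum_congr fun s => ?_
    simp only [Matrix.vecMul, dotProduct, Finset.mul_sum]
  rw [h1, Summable.tsum_finsetSum (fun i _ => hsumi i)]
  have h2 : ∀ i : K, (∑' s, α s * (ξs s i * M i ℓ)) = ξ i * M i ℓ := by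
    intro i
    have : (fun s => α s * (ξs s i * M i ℓ)) = fun s => (α s * ξs s i) * M i ℓ := by
      funext s; ring
    rw [this, tsum_mul_right, hsp.2.2.2 i]
  simp only [h2]
  simp [Matrix.vecMul, dotProduct]

lemma step_upper {ξ : K → ℝ} (hξ : ξ ∈ stdSimplex ℝ K) :
    v δ ξ ≤ (1 - δ) * C + δ * v δ (Matrix.vecMul ξ M) := by
  refine v_le M hM u hu0 C hC v hv δ hδ hξ fun α ξs hsp => ?_
  have hα0 := hsp.1
  have hαsum : Summable α := by
    by_contra hs
    have := tsum_eq_zero_of_not_summable hs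
    rw [hsp.2.2.1] at this; norm_num at this
  have hδ0 := hδ.1
  have hδ1 := hδ.2
  have hvb : ∀ s, 0 ≤ v δ (Matrix.vecMul (ξs s) M) ∧ v δ (Matrix.vecMul (ξs s) M) ≤ C :=
    fun s => (hv δ hδ).1 _ (vecMul_mem hM (hsp.2.1 s))
  have huC : ∀ s, u (ξs s) ≤ C := fun s => hC.1 (Set.mem_image_of_mem u (hsp.2.1 s))
  have hu0' : ∀ s, 0 ≤ u (ξs s) := fun s => hu0 _ (hsp.2.1 s)
  have hCnn : 0 ≤ C := le_trans (hu0' 0) (huC 0)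
  -- termwise bound
  have hsum1 : Summable (fun s => α s * ((1-δ)*C + δ * v δ (Matrix.vecMul (ξs s) M))) :=
    weighted_summable (B := C) hα0 hαsum
      (fun s => by nlinarith [(hvb s).1, (hvb s).2])
      (fun s => by nlinarith [(hvb s).1, (hvb s).2])
  have hsum0 : Summable (fun s => α s * ((1-δ)*u (ξs s) + δ * v δ (Matrix.vecMul (ξs s) M))) :=
    weighted_summable (B := C) hα0 hαsum
      (fun s => by nlinarith [(hvb s).1, (hvb s).2, hu0' s])
      (fun s => by nlinarith [(hvb s).1, (hvb s).2, hu0' s, huC s])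
  have hle : splitPayoff M u δ (v δ) α ξs
      ≤ ∑' s, α s * ((1-δ)*C + δ * v δ (Matrix.vecMul (ξs s) M)) := by
    refine Summable.tsum_le_tsum (fun s => ?_) hsum0 hsum1
    have hin : (1-δ)*u (ξs s) + δ * v δ (Matrix.vecMul (ξs s) M)
        ≤ (1-δ)*C + δ * v δ (Matrix.vecMul (ξs s) M) := by nlinarith [huC s]
    exact mul_le_mul_of_nonneg_left hin (hα0 s)
  have hsum2 : Summable (fun s => α s * ((1-δ)*C)) := hαsum.mul_right _
  have hsum3 : Summable (fun s => α s * (δ * v δ (Matrix.vecMul (ξs s) M))) :=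
    weighted_summable (B := C) hα0 hαsum
      (fun s => mul_nonneg hδ0 (hvb s).1)
      (fun s => by nlinarith [(hvb s).1, (hvb s).2])
  have hsplit2 : (∑' s, α s * ((1-δ)*C + δ * v δ (Matrix.vecMul (ξs s) M)))
      = (∑' s, α s * ((1-δ)*C)) + ∑' s, α s * (δ * v δ (Matrix.vecMul (ξs s) M)) := by
    rw [← Summable.tsum_add hsum2 hsum3]
    refine tsum_congr fun s => ?_
    ring
  have heq2 : (∑' s, α s * ((1-δ)*C)) = (1-δ)*C := by
    rw [tsum_mul_right, hsp.2.2.1, one_mul]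
  have heq3 : (∑' s, α s * (δ * v δ (Matrix.vecMul (ξs s) M)))
      = δ * ∑' s, α s * v δ (Matrix.vecMul (ξs s) M) := by
    rw [← tsum_mul_left]
    refine tsum_congr fun s => ?_
    ring
  have hconc := v_concave M hM u hu0 C hC v hv δ hδ (vecMul_mem hM hξ) (split_vecMul M hM hsp)
  calc splitPayoff M u δ (v δ) α ξs
      ≤ (∑' s, α s * ((1-δ)*C)) + ∑' s, α s * (δ * v δ (Matrix.vecMul (ξs s) M)) := by
        rw [← hsplit2]; exact hle
    _ = (1-δ)*C + δ * ∑' s, α s * v δ (Matrix.vecMul (ξs s) M) := by rw [heq2, heq3]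
    _ ≤ (1-δ)*C + δ * v δ (Matrix.vecMul ξ M) := by nlinarith [hconc]

lemma iter_bounds {ξ : K → ℝ} (hξ : ξ ∈ stdSimplex ℝ K) (n : ℕ) :
    δ^n * v δ (Matrix.vecMul ξ (M^n)) ≤ v δ ξ ∧
    v δ ξ ≤ (1 - δ^n) * C + δ^n * v δ (Matrix.vecMul ξ (M^n)) := by
  induction n generalizing ξ with
  | zero => simp [Matrix.vecMul_one]
  | succ n ih =>
    have hξM : Matrix.vecMul ξ M ∈ stdSimplex ℝ K := vecMul_mem hM hξ
    obtain ⟨ih1, ih2⟩ := ih hξM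
    rw [Matrix.vecMul_vecMul] at ih1 ih2
    have hpow : M * M^n = M^(n+1) := (pow_succ' M n).symm
    rw [hpow] at ih1 ih2
    have hlow := step_lower M hM u hu0 C hC v hv δ hδ hξ
    have hup := step_upper M hM u hu0 C hC v hv δ hδ hξ
    have hδ0 := hδ.1
    have hδ1 := hδ.2
    have hvb : 0 ≤ v δ (Matrix.vecMul ξ (M^(n+1))) ∧ v δ (Matrix.vecMul ξ (M^(n+1))) ≤ C := by
      refine (hv δ hδ).1 _ ?_
      exact vecMul_mem (stoch_pow hM (n+1)) hξ
    have hδn : (0:ℝ) ≤ δ^n := pow_nonneg hδ0 n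
    constructor
    · calc δ^(n+1) * v δ (Matrix.vecMul ξ (M^(n+1)))
          = δ * (δ^n * v δ (Matrix.vecMul ξ (M^(n+1)))) := by ring
        _ ≤ δ * v δ (Matrix.vecMul ξ M) := by nlinarith [ih1]
        _ ≤ v δ ξ := hlow
    · have huC : 0 ≤ C := by
        have h1 := (hv δ hδ).1 ξ hξ
        linarith [h1.1, h1.2]
      calc v δ ξ ≤ (1-δ)*C + δ * v δ (Matrix.vecMul ξ M) := hup
        _ ≤ (1-δ)*C + δ * ((1 - δ^n) * C + δ^n * v δ (Matrix.vecMul ξ (M^(n+1)))) := by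
            nlinarith [ih2]
        _ = (1 - δ^(n+1)) * C + δ^(n+1) * v δ (Matrix.vecMul ξ (M^(n+1))) := by ring


lemma v_interior_lip {p q : K → ℝ} (hp : p ∈ stdSimplex ℝ K) (hq : q ∈ stdSimplex ℝ K)
    {c d : ℝ} (hc : 0 < c) (hd : 0 < d) (hqc : ∀ ℓ, c ≤ q ℓ)
    (hpq : ∀ ℓ, |p ℓ - q ℓ| ≤ d) : v δ p ≤ v δ q + (d / c) * C := by
  set lam : ℝ := c / (c + d) with hlam
  have hcd : 0 < c + d := by linarith
  have hlam0 : 0 < lam := by positivity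
  have hlam1 : lam < 1 := by
    rw [hlam, div_lt_one hcd]; linarith
  set r : K → ℝ := fun ℓ => (q ℓ - lam * p ℓ) / (1 - lam) with hr
  have h1lam : 0 < 1 - lam := by linarith
  have hrΔ : r ∈ stdSimplex ℝ K := by
    constructor
    · intro ℓ
      apply div_nonneg _ h1lam.le
      have h1 : p ℓ ≤ q ℓ + d := by have := hpq ℓ; rw [abs_le] at this; linarith [this.1, this.2]
      have h2 : lam * (q ℓ + d) ≤ q ℓ := by
        rw [hlam, div_mul_eq_mul_div, div_le_iff₀ hcd]
        have := hqc ℓ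
        nlinarith
      nlinarith [hlam0.le]
    · rw [← Finset.sum_div]
      rw [div_eq_one_iff_eq h1lam.ne']
      rw [Finset.sum_sub_distrib, ← Finset.mul_sum, hq.2, hp.2]
      ring
  -- the two-point split of q
  set α : ℕ → ℝ := fun s => if s = 0 then lam else if s = 1 then 1 - lam else 0 with hα
  set ξs : ℕ → K → ℝ := fun s => if s = 0 then p else r with hξs
  have hsupp : ∀ (f : ℕ → ℝ), (∀ s ∉ ({0, 1} : Finset ℕ), α s * f s = 0) := by
    intro f s hs
    simp only [Finset.mem_insert, Finset.mem_singleton] at hs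
    push_neg at hs
    simp [hα, hs.1, hs.2]
  have hsplit : IsSplit q α ξs := by
    refine ⟨fun s => ?_, fun s => ?_, ?_, fun ℓ => ?_⟩
    · simp only [hα]
      split
      · exact hlam0.le
      · split
        · linarith
        · exact le_refl 0
    · simp only [hξs]; split; exacts [hp, hrΔ]
    · rw [tsum_eq_sum (s := {0, 1}) (by
        intro s hs
        simp only [Finset.mem_insert, Finset.mem_singleton] at hs
        push_neg at hs
        simp [hα, hs.1, hs.2])]
      simp [hα]
    · rw [tsum_eq_sum (s := {0, 1}) (by
        intro s hs
        simp only [Finset.mem_insert, Finset.mem_singleton] at hs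
        push_neg at hs
        simp [hα, hs.1, hs.2])]
      simp only [hα, hξs]
      norm_num
      rw [hr]
      field_simp
      ring
  have hconc := v_concave M hM u hu0 C hC v hv δ hδ hq hsplit
  have htsum : (∑' s, α s * v δ (ξs s)) = lam * v δ p + (1 - lam) * v δ r := by
    rw [tsum_eq_sum (s := {0, 1}) (by
        intro s hs
        simp only [Finset.mem_insert, Finset.mem_singleton] at hs
        push_neg at hs
        simp [hα, hs.1, hs.2])]
    simp [hα, hξs]
  rw [htsum] at hconc
  have hvr : 0 ≤ v δ r := ((hv δ hδ).1 r hrΔ).1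
  have hvpC : v δ p ≤ C := ((hv δ hδ).1 p hp).2
  have hvp0 : 0 ≤ v δ p := ((hv δ hδ).1 p hp).1
  have hkey : v δ p ≤ v δ q + (1 - lam) * C := by nlinarith
  have hfrac : (1 - lam) ≤ d / c := by
    rw [hlam]
    have h1 : 1 - c / (c + d) = d / (c + d) := by
      rw [eq_div_iff hcd.ne', sub_mul, div_mul_cancel₀ _ hcd.ne']; ring
    rw [h1]
    gcongr
    linarith
  have hC0 : 0 ≤ C := by linarith
  nlinarith [hfrac, hC0]


end Value
end Value2

set_option maxHeartbeats 2000000 in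
theorem markovian_persuasion_value_close_to_value_at_invariant
    {K : Type*} [Fintype K] [Nonempty K] [DecidableEq K]
    (M : Matrix K K ℝ) (hM : IsStochastic M)
    (herg : ∃ N : ℕ, 1 ≤ N ∧ ∀ i j, 0 < (M ^ N) i j)
    (u : (K → ℝ) → ℝ) (hu0 : ∀ ξ ∈ stdSimplex ℝ K, 0 ≤ u ξ)
    (husc : UpperSemicontinuousOn u (stdSimplex ℝ K))
    (C : ℝ) (hC : IsLUB (u '' stdSimplex ℝ K) C)
    (v : ℝ → (K → ℝ) → ℝ) (hv : IsValueFamily M u C v)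
    (πM : K → ℝ) (hπ : πM ∈ stdSimplex ℝ K) (hπinv : Matrix.vecMul πM M = πM)
    (hπuniq : ∀ π' ∈ stdSimplex ℝ K, Matrix.vecMul π' M = π' → π' = πM)
    (hπpos : ∀ ℓ, 0 < πM ℓ)
    (cstar : ℝ) (hcstar : IsLeast (Set.range πM) cstar) :
    ∃ Cconst : ℝ, 0 < Cconst ∧
      ∀ δ : ℝ, 1 - cstar / 2 < δ → δ < 1 →
        ∀ ξ ∈ stdSimplex ℝ K,
          |v δ ξ - v δ πM| ≤ Cconst * ((1 - δ) * Real.logb 2 (1 / (1 - δ))) := by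
  obtain ⟨N, hN1, hNpos⟩ := herg
  -- basic facts about cstar and C
  obtain ⟨ℓ₀, hℓ₀⟩ := hcstar.1
  have hcstar_pos : 0 < cstar := hℓ₀ ▸ hπpos ℓ₀
  have hcstar_le : ∀ ℓ, cstar ≤ πM ℓ := fun ℓ => hcstar.2 ⟨ℓ, rfl⟩
  have hcstar_le1 : cstar ≤ 1 := by
    calc cstar ≤ πM ℓ₀ := hcstar_le ℓ₀
      _ ≤ 1 := simplex_le_one hπ ℓ₀
  have hC0 : 0 ≤ C := le_trans (hu0 πM hπ) (hC.1 (Set.mem_image_of_mem u hπ))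
  -- the minimum entry of M^N
  set P : Matrix K K ℝ := M ^ N with hP
  have hPstoch : IsStochastic P := stoch_pow hM N
  obtain ⟨p₀⟩ : Nonempty (K × K) := inferInstance
  set ε₀ : ℝ := Finset.univ.inf' ⟨p₀, Finset.mem_univ p₀⟩ (fun p : K × K => P p.1 p.2) with hε₀
  have hε₀le : ∀ i j, ε₀ ≤ P i j := fun i j =>
    Finset.inf'_le _ (Finset.mem_univ (i, j))
  have hε₀pos : 0 < ε₀ := by
    rw [hε₀]
    exact (Finset.lt_inf'_iff _).2 fun p _ => hNpos p.1 p.2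
  set k : ℕ := Fintype.card K with hk
  set θ : ℝ := 1 - (k : ℝ) * ε₀ with hθ
  have hθ0 : 0 ≤ θ := by
    obtain ⟨i⟩ := ‹Nonempty K›
    have h1 : ∑ (_ : K), ε₀ ≤ ∑ ℓ, P i ℓ := Finset.sum_le_sum fun ℓ _ => hε₀le i ℓ
    rw [hPstoch.2 i] at h1
    simp only [Finset.sum_const, Finset.card_univ, nsmul_eq_mul] at h1
    rw [hθ]; linarith
  have hθ1 : θ < 1 := by
    rw [hθ]
    have hk1 : (1:ℝ) ≤ (k:ℝ) := by
      rw [hk]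
      exact_mod_cast Fintype.card_pos
    nlinarith [hε₀pos]
  obtain ⟨m₀, hm₀⟩ : ∃ m₀ : ℕ, θ^m₀ < 1/2 := exists_pow_lt_of_lt_one (by norm_num) hθ1
  -- the constant
  refine ⟨4*N*m₀*C + C/cstar + 1, by positivity, fun δ hδlow hδ1 ξ hξ => ?_⟩
  set ε : ℝ := 1 - δ with hεdef
  have hε_pos : 0 < ε := by rw [hεdef]; linarith
  have hε_lt : ε < cstar/2 := by rw [hεdef]; linarith
  have hε_half : ε < 1/2 := by linarith
  have hδ0 : (0:ℝ) ≤ δ := by nlinarith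
  have hδIco : δ ∈ Set.Ico (0:ℝ) 1 := ⟨hδ0, hδ1⟩
  set L : ℝ := Real.logb 2 (1/ε) with hL
  have hL1 : 1 ≤ L := by
    rw [hL]
    have h2 : (2:ℝ) ≤ 1/ε := by rw [le_div_iff₀ hε_pos]; linarith
    have h3 := Real.logb_le_logb_of_le (b := 2) (by norm_num) (by norm_num) h2
    simpa using h3
  -- choice of the number of steps
  set j : ℕ := ⌈L⌉₊ + 2 with hj
  have h2j : (1/2:ℝ)^j ≤ ε/4 := by
    have h1 : (2:ℝ)^(L) = 1/ε := Real.rpow_logb (by norm_num) (by norm_num) (by positivity)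
    have h2 : (2:ℝ)^(⌈L⌉₊:ℝ) ≥ (2:ℝ)^L :=
      Real.rpow_le_rpow_of_exponent_le (by norm_num) (Nat.le_ceil L)
    have h3 : ((2:ℝ)^(⌈L⌉₊:ℕ) : ℝ) = (2:ℝ)^((⌈L⌉₊:ℕ):ℝ) := (Real.rpow_natCast 2 _).symm
    have h4 : (1/ε) ≤ (2:ℝ)^(⌈L⌉₊:ℕ) := by
      rw [h3]; rw [← h1]; exact_mod_cast h2
    have h5 : (1/2:ℝ)^j = 1 / ((2:ℝ)^(⌈L⌉₊:ℕ) * 4) := by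
      rw [hj, pow_add, div_pow, div_pow, one_pow, one_pow]
      norm_num
      ring
    rw [h5]
    rw [div_le_div_iff₀ (by positivity) (by norm_num)]
    have h6 : (1/ε) * 4 ≤ (2:ℝ)^(⌈L⌉₊:ℕ) * 4 := by linarith
    calc (1:ℝ) * 4 = (1/ε) * 4 * ε := by field_simp
      _ ≤ (2:ℝ)^(⌈L⌉₊:ℕ) * 4 * ε := by nlinarith
      _ = ε * ((2:ℝ)^(⌈L⌉₊:ℕ) * 4) := by ring
  set m : ℕ := m₀ * j with hm
  set n : ℕ := N * m with hn
  -- mixing bound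
  set p : K → ℝ := Matrix.vecMul ξ (M^n) with hpdef
  have hpΔ : p ∈ stdSimplex ℝ K := vecMul_mem (stoch_pow hM n) hξ
  have hπPgen : ∀ N' : ℕ, Matrix.vecMul πM (M^N') = πM := by
    intro N'
    induction N' with
    | zero => rw [pow_zero, Matrix.vecMul_one]
    | succ N' ihN => rw [pow_succ, ← Matrix.vecMul_vecMul, ihN, hπinv]
  have hπP : Matrix.vecMul πM P = πM := hπPgen N
  have hmix : ∑ ℓ, |p ℓ - πM ℓ| ≤ ε/2 := by
    have h1 := mixing hPstoch hε₀le hπ hπP hξ m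
    have h2 : Matrix.vecMul ξ (P^m) = p := by
      rw [hpdef, hP, ← pow_mul, hn]
    rw [h2] at h1
    have h3 : θ^m ≤ (1/2:ℝ)^j := by
      rw [hm, pow_mul]
      exact pow_le_pow_left₀ (pow_nonneg hθ0 _) hm₀.le j
    calc ∑ ℓ, |p ℓ - πM ℓ| ≤ 2 * θ^m := h1
      _ ≤ 2 * (1/2:ℝ)^j := by linarith
      _ ≤ 2 * (ε/4) := by linarith
      _ = ε/2 := by ring
  have hmix_pt : ∀ ℓ, |p ℓ - πM ℓ| ≤ ε/2 := by
    intro ℓ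
    calc |p ℓ - πM ℓ| ≤ ∑ ℓ', |p ℓ' - πM ℓ'| :=
          Finset.single_le_sum (f := fun ℓ' => |p ℓ' - πM ℓ'|)
            (fun ℓ' _ => abs_nonneg _) (Finset.mem_univ ℓ)
      _ ≤ ε/2 := hmix
  -- |v ξ - v p| ≤ (1 - δ^n) C ≤ n ε C
  have hvb := (hv δ hδIco).1
  have hiter := iter_bounds M hM u hu0 C hC v hv δ hδIco hξ n
  have hvpb := hvb p hpΔ
  have hδn : 1 - δ^n ≤ n * ε := by
    have h1 : (1:ℝ) + n * (δ - 1) ≤ (1 + (δ-1))^n := one_add_mul_le_pow (by linarith) n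
    have h2 : (1 + (δ-1) : ℝ) = δ := by ring
    rw [h2] at h1
    rw [hεdef]
    nlinarith
  have hδn0 : (0:ℝ) ≤ 1 - δ^n := by
    have := pow_le_one₀ hδ0 hδ1.le (n := n)
    linarith
  have he1 : (1 - δ^n) * C ≤ (n:ℝ) * ε * C := mul_le_mul_of_nonneg_right hδn hC0
  have hbd1 : |v δ ξ - v δ p| ≤ (n : ℝ) * ε * C := by
    rw [abs_le]
    constructor
    · have h1 := hiter.1
      nlinarith [mul_nonneg hδn0 (sub_nonneg.2 hvpb.2), he1]
    · have h2 := hiter.2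
      nlinarith [mul_nonneg hδn0 hvpb.1, he1]
  -- |v p - v πM| ≤ (ε/cstar) C
  have hplow : ∀ ℓ, cstar/2 ≤ p ℓ := by
    intro ℓ
    have h1 := hmix_pt ℓ
    rw [abs_le] at h1
    have h2 := hcstar_le ℓ
    linarith [h1.1, h1.2]
  have hbd2a : v δ p ≤ v δ πM + ((ε/2) / cstar) * C :=
    v_interior_lip M hM u hu0 C hC v hv δ hδIco hpΔ hπ hcstar_pos (by linarith)
      hcstar_le hmix_pt
  have hbd2b : v δ πM ≤ v δ p + ((ε/2) / (cstar/2)) * C := by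
    refine v_interior_lip M hM u hu0 C hC v hv δ hδIco hπ hpΔ (by linarith) (by linarith)
      hplow (fun ℓ => ?_)
    rw [abs_sub_comm]
    exact hmix_pt ℓ
  have hbd2 : |v δ p - v δ πM| ≤ (ε/cstar) * C := by
    rw [abs_le]
    constructor
    · have h1 : ((ε/2) / (cstar/2)) = ε / cstar := by
        field_simp
      rw [h1] at hbd2b
      linarith
    · have h2 : ((ε/2) / cstar) ≤ ε / cstar := by
        rw [div_le_div_iff₀ hcstar_pos hcstar_pos]
        nlinarith [mul_nonneg hε_pos.le hcstar_pos.le]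
      nlinarith [mul_le_mul_of_nonneg_right h2 hC0]
  -- the size of n
  have hnle : (n:ℝ) ≤ 4 * N * m₀ * L := by
    have hjle : (j:ℝ) ≤ 4 * L := by
      rw [hj]
      push_cast
      have := Nat.ceil_lt_add_one (by linarith : (0:ℝ) ≤ L)
      linarith
    have h1 : (n:ℝ) = (N:ℝ) * ((m₀:ℝ) * (j:ℝ)) := by rw [hn, hm]; push_cast; ring
    rw [h1]
    have hN0 : (0:ℝ) ≤ N := Nat.cast_nonneg N
    have hm₀0 : (0:ℝ) ≤ m₀ := Nat.cast_nonneg m₀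
    calc (N:ℝ) * ((m₀:ℝ) * (j:ℝ)) ≤ (N:ℝ) * ((m₀:ℝ) * (4 * L)) := by
          have hj0 : (0:ℝ) ≤ (j:ℝ) := Nat.cast_nonneg j
          nlinarith [mul_le_mul_of_nonneg_left hjle (mul_nonneg hN0 hm₀0)]
      _ = 4 * (N:ℝ) * (m₀:ℝ) * L := by ring
  -- conclusion
  have htri : |v δ ξ - v δ πM| ≤ (n:ℝ) * ε * C + (ε/cstar) * C := by
    calc |v δ ξ - v δ πM| ≤ |v δ ξ - v δ p| + |v δ p - v δ πM| := abs_sub_le _ _ _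
      _ ≤ (n:ℝ) * ε * C + (ε/cstar) * C := add_le_add hbd1 hbd2
  have hεL : ε ≤ ε * L := le_mul_of_one_le_right hε_pos.le hL1
  have h1εL : 0 ≤ ε * L := by nlinarith
  have ha : (n:ℝ) * ε * C ≤ (4 * N * m₀ * L) * ε * C :=
    mul_le_mul_of_nonneg_right (mul_le_mul_of_nonneg_right hnle hε_pos.le) hC0
  have hb : (ε/cstar) * C ≤ (ε * L / cstar) * C := by
    refine mul_le_mul_of_nonneg_right ?_ hC0
    rw [div_le_div_iff₀ hcstar_pos hcstar_pos]
    nlinarith [mul_nonneg (mul_nonneg hε_pos.le (by linarith : (0:ℝ) ≤ L - 1)) hcstar_pos.le]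
  have hco : (4 * (N:ℝ) * m₀ * L) * ε * C + (ε * L / cstar) * C
      = (4*(N:ℝ)*(m₀:ℝ)*C + C/cstar) * (ε * L) := by ring
  calc |v δ ξ - v δ πM| ≤ (n:ℝ) * ε * C + (ε/cstar) * C := htri
    _ ≤ (4 * (N:ℝ) * m₀ * L) * ε * C + (ε * L / cstar) * C := add_le_add ha hb
    _ = (4*(N:ℝ)*(m₀:ℝ)*C + C/cstar) * (ε * L) := hco
    _ ≤ (4*N*m₀*C + C/cstar + 1) * ((1 - δ) * Real.logb 2 (1 / (1 - δ))) := by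
        rw [← hεdef, ← hL]
        push_cast
        nlinarith [h1εL]
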